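/- Let K be a field with char K = 2. Then the K-algebras Γ = K⟨α,β⟩/(α², β², αβ−βα) and Λ = K⟨a,b⟩/(ab, ba, a²−b²) are not isomorphic. -/

import Mathlib

open FreeAlgebra

/-- Relations of `Γ(1,1;1) = K⟨α,β⟩/(α², β², αβ - βα)`. -/
def gammaRel (K : Type*) [Field K] : FreeAlgebra K (Fin 2) → FreeAlgebra K (Fin 2) → Prop :=
  fun x y =>
    (x = ι K 0 * ι K 0 ∧ y = 0) ∨ (x = ι K 1 * ι K 1 ∧ y = 0) ∨
    (x = ι K 0 * ι K 1 ∧ y = ι K 1 * ι K 0)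

/-- Relations of `Λ(1,1;2,2) = K⟨a,b⟩/(ab, ba, a² - b²)`. -/
def lambdaRel (K : Type*) [Field K] : FreeAlgebra K (Fin 2) → FreeAlgebra K (Fin 2) → Prop :=
  fun x y =>
    (x = ι K 0 * ι K 1 ∧ y = 0) ∨ (x = ι K 1 * ι K 0 ∧ y = 0) ∨
    (x = ι K 0 * ι K 0 ∧ y = ι K 1 * ι K 1)

section Aux

variable (K : Type*) [Field K]

/-- Γ is commutative. -/
lemma gamma_comm (x y : RingQuot (gammaRel K)) : x * y = y * x := by
  have hAB : RingQuot.mkAlgHom K (gammaRel K) (ι K 0) * RingQuot.mkAlgHom K (gammaRel K) (ι K 1)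
      = RingQuot.mkAlgHom K (gammaRel K) (ι K 1) * RingQuot.mkAlgHom K (gammaRel K) (ι K 0) := by
    rw [← map_mul, ← map_mul]
    exact RingQuot.mkAlgHom_rel K (Or.inr (Or.inr ⟨rfl, rfl⟩))
  have hgen : ∀ (j : Fin 2) (y : RingQuot (gammaRel K)),
      RingQuot.mkAlgHom K (gammaRel K) (ι K j) * y
        = y * RingQuot.mkAlgHom K (gammaRel K) (ι K j) := by
    intro j y
    obtain ⟨z, rfl⟩ := RingQuot.mkAlgHom_surjective K (gammaRel K) y
    induction z using FreeAlgebra.induction with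
    | grade0 r => simp [Algebra.commutes]
    | grade1 i =>
      fin_cases i <;> fin_cases j
      · rfl
      · exact hAB.symm
      · exact hAB
      · rfl
    | mul a b ha hb => rw [map_mul, ← mul_assoc, ha, mul_assoc, hb, mul_assoc]
    | add a b ha hb => rw [map_add, mul_add, add_mul, ha, hb]
  obtain ⟨z, rfl⟩ := RingQuot.mkAlgHom_surjective K (gammaRel K) x
  induction z using FreeAlgebra.induction with
  | grade0 r => simp [Algebra.commutes]
  | grade1 i => exact hgen i y
  | mul a b ha hb => rw [map_mul, mul_assoc, hb, ← mul_assoc, ha, mul_assoc]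
  | add a b ha hb => rw [map_add, add_mul, mul_add, ha, hb]

/-- In char 2, every square in Γ is a scalar. -/
lemma gamma_sq_scalar (hchar : ringChar K = 2) (x : RingQuot (gammaRel K)) :
    ∃ c : K, x * x = algebraMap K (RingQuot (gammaRel K)) c := by
  have h2K : (2 : K) = 0 := by
    have := CharP.cast_eq_zero K (ringChar K)
    rw [hchar] at this; exact_mod_cast this
  have hchar2 : ∀ t : RingQuot (gammaRel K), t + t = 0 := by
    intro t
    have h2 : (2 : RingQuot (gammaRel K)) = algebraMap K (RingQuot (gammaRel K)) (2 : K) := by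
      rw [map_ofNat]
    rw [← two_mul, h2, h2K, map_zero, zero_mul]
  have hA2 : RingQuot.mkAlgHom K (gammaRel K) (ι K 0)
      * RingQuot.mkAlgHom K (gammaRel K) (ι K 0) = 0 := by
    rw [← map_mul]
    have := RingQuot.mkAlgHom_rel K (s := gammaRel K) (Or.inl ⟨rfl, rfl⟩)
    simpa using this
  have hB2 : RingQuot.mkAlgHom K (gammaRel K) (ι K 1)
      * RingQuot.mkAlgHom K (gammaRel K) (ι K 1) = 0 := by
    rw [← map_mul]
    have := RingQuot.mkAlgHom_rel K (s := gammaRel K) (Or.inr (Or.inl ⟨rfl, rfl⟩))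
    simpa using this
  obtain ⟨z, rfl⟩ := RingQuot.mkAlgHom_surjective K (gammaRel K) x
  induction z using FreeAlgebra.induction with
  | grade0 r => exact ⟨r * r, by simp⟩
  | grade1 i =>
    refine ⟨0, ?_⟩
    fin_cases i
    · simpa using hA2
    · simpa using hB2
  | mul a b ha hb =>
    obtain ⟨c, hc⟩ := ha
    obtain ⟨d, hd⟩ := hb
    refine ⟨c * d, ?_⟩
    rw [map_mul]
    calc RingQuot.mkAlgHom K (gammaRel K) a * RingQuot.mkAlgHom K (gammaRel K) b
          * (RingQuot.mkAlgHom K (gammaRel K) a * RingQuot.mkAlgHom K (gammaRel K) b)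
        = RingQuot.mkAlgHom K (gammaRel K) a * RingQuot.mkAlgHom K (gammaRel K) a
          * (RingQuot.mkAlgHom K (gammaRel K) b * RingQuot.mkAlgHom K (gammaRel K) b) := by
          rw [mul_assoc, mul_assoc, ← mul_assoc (RingQuot.mkAlgHom K (gammaRel K) b),
            gamma_comm K (RingQuot.mkAlgHom K (gammaRel K) b)
              (RingQuot.mkAlgHom K (gammaRel K) a), mul_assoc]
      _ = algebraMap K (RingQuot (gammaRel K)) (c * d) := by rw [hc, hd, map_mul]
  | add a b ha hb =>
    obtain ⟨c, hc⟩ := ha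
    obtain ⟨d, hd⟩ := hb
    refine ⟨c + d, ?_⟩
    rw [map_add]
    set A := RingQuot.mkAlgHom K (gammaRel K) a with hA
    set B := RingQuot.mkAlgHom K (gammaRel K) b with hB
    calc (A + B) * (A + B) = A * A + A * B + (A * B + B * B) := by
          rw [add_mul, mul_add, mul_add, gamma_comm K B A]
      _ = (A * A + B * B) + (A * B + A * B) := by abel
      _ = algebraMap K (RingQuot (gammaRel K)) (c + d) := by
          rw [hchar2 (A * B), add_zero, hc, hd, ← map_add]

open Matrix in
/-- In Λ, a² is not a scalar. -/
lemma lambda_sq_not_scalar (c : K) :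
    RingQuot.mkAlgHom K (lambdaRel K) (ι K 0) * RingQuot.mkAlgHom K (lambdaRel K) (ι K 0) ≠
      algebraMap K (RingQuot (lambdaRel K)) c := by
  intro h
  set u : Matrix (Fin 4) (Fin 4) K := single 1 0 1 + single 3 1 1 with hu
  set v : Matrix (Fin 4) (Fin 4) K := single 2 0 1 + single 3 2 1 with hv
  have huv : u * v = 0 := by
    rw [hu, hv]
    simp [add_mul, mul_add, single_mul_single_of_ne, Fin.ext_iff,
      show (0:Fin 4) ≠ 3 by decide, show (1:Fin 4) ≠ 3 by decide]
  have hvu : v * u = 0 := by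
    rw [hu, hv]
    simp [add_mul, mul_add, single_mul_single_of_ne, Fin.ext_iff,
      show (0:Fin 4) ≠ 3 by decide, show (2:Fin 4) ≠ 3 by decide]
  have huu : u * u = single 3 0 1 := by
    rw [hu]
    simp [add_mul, mul_add, single_mul_single_of_ne, single_mul_single_same, Fin.ext_iff,
      show (0:Fin 4) ≠ 3 by decide, show (1:Fin 4) ≠ 3 by decide]
  have hvv : v * v = single 3 0 1 := by
    rw [hv]
    simp [add_mul, mul_add, single_mul_single_of_ne, single_mul_single_same, Fin.ext_iff,
      show (0:Fin 4) ≠ 3 by decide, show (2:Fin 4) ≠ 3 by decide]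
  let F : FreeAlgebra K (Fin 2) →ₐ[K] Matrix (Fin 4) (Fin 4) K :=
    FreeAlgebra.lift K (fun j => if j = 0 then u else v)
  have hF0 : F (ι K 0) = u := by simp [F]
  have hF1 : F (ι K 1) = v := by simp [F]
  have hrel : ∀ ⦃x y⦄, lambdaRel K x y → F x = F y := by
    rintro x y (⟨rfl, rfl⟩ | ⟨rfl, rfl⟩ | ⟨rfl, rfl⟩) <;>
      simp only [_root_.map_mul, map_zero, hF0, hF1, huv, hvu, huu, hvv]
  let φ : RingQuot (lambdaRel K) →ₐ[K] Matrix (Fin 4) (Fin 4) K :=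
    RingQuot.liftAlgHom K ⟨F, hrel⟩
  have hφ := congrArg φ h
  rw [_root_.map_mul, AlgHom.commutes] at hφ
  rw [RingQuot.liftAlgHom_mkAlgHom_apply, hF0, huu] at hφ
  have h30 := congrFun (congrFun hφ 3) 0
  simp [Matrix.algebraMap_eq_diagonal, Matrix.diagonal_apply, Matrix.single] at h30

end Aux

/-- In characteristic 2, the algebras `K⟨α,β⟩/(α², β², αβ-βα)` and
`K⟨a,b⟩/(ab, ba, a²-b²)` are not isomorphic. -/
theorem stmt12 (K : Type*) [Field K] (hchar : ringChar K = 2) :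
    IsEmpty (RingQuot (gammaRel K) ≃ₐ[K] RingQuot (lambdaRel K)) := by
  constructor
  intro f
  obtain ⟨c, hc⟩ := gamma_sq_scalar K hchar (f.symm (RingQuot.mkAlgHom K (lambdaRel K) (ι K 0)))
  apply lambda_sq_not_scalar K c
  have := congrArg f hc
  rw [map_mul, f.apply_symm_apply, AlgEquiv.commutes] at this
  exact this
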